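/- For a finite set N with n elements and a function f : 2^N → ℤ, the zeta transform defined by f̂(Y) = Σ_{S ⊆ Y} f(S) can be computed for all Y ⊆ N simultaneously using O(2^n · n) ring additions (Yates's method / fast zeta transform): defining f_0 = f and f_j(Y) = f_{j−1}(Y) + [x_j ∈ Y] · f_{j−1}(Y \ {x_j}) for an enumeration x_1, …, x_n of N, one has f_n = f̂. -/

import Mathlib

open scoped Classical

/-- Data of a (finite) tree decomposition: an index type, a graph on it, and bags. -/
structure TDData (V : Type) where
  ι : Type
  fin : Fintype ι
  tree : SimpleGraph ι
  bag : ι → Finset V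

/-- `D` is a tree decomposition of the graph `G`. -/
def IsGraphTD {V : Type} (G : SimpleGraph V) (D : TDData V) : Prop :=
  D.tree.IsTree ∧
  (∀ v : V, ∃ t, v ∈ D.bag t) ∧
  (∀ u v : V, G.Adj u v → ∃ t, u ∈ D.bag t ∧ v ∈ D.bag t) ∧
  (∀ v : V, (D.tree.induce {t | v ∈ D.bag t}).Connected)

/-- `D` is a tree decomposition of the hypergraph with edge family `E`. -/
def IsHyperTD {V : Type} (E : Finset (Finset V)) (D : TDData V) : Prop :=
  D.tree.IsTree ∧
  (∀ v : V, ∃ t, v ∈ D.bag t) ∧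
  (∀ e ∈ E, ∃ t, e ⊆ D.bag t) ∧
  (∀ v : V, (D.tree.induce {t | v ∈ D.bag t}).Connected)

/-- A monotone width function. -/
def MonoWidth {V : Type} (f : Finset V → NNReal) : Prop :=
  ∀ X Y : Finset V, X ⊆ Y → f X ≤ f Y

/-- The `f`-width of a tree decomposition: the supremum of `f` over its bags. -/
noncomputable def tdWidth {V : Type} (f : Finset V → NNReal) (D : TDData V) : NNReal :=
  ⨆ t : D.ι, f (D.bag t)

/-- The `f`-tree-width of a graph. -/
noncomputable def ftw {V : Type} (G : SimpleGraph V) (f : Finset V → NNReal) : NNReal :=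
  ⨅ D : {D : TDData V // IsGraphTD G D}, tdWidth f D.1

/-- The `f`-hypertree-width of a hypergraph. -/
noncomputable def fhtw {V : Type} (E : Finset (Finset V)) (f : Finset V → NNReal) : NNReal :=
  ⨅ D : {D : TDData V // IsHyperTD E D}, tdWidth f D.1

/-- The `f`-clique-number of a graph. -/
noncomputable def fCliqueNum {V : Type} (G : SimpleGraph V) (f : Finset V → NNReal) : NNReal :=
  ⨆ Ω : {Ω : Finset V // G.IsClique (Ω : Set V)}, f Ω.1

/-- The Gaifman (primal) graph of a hypergraph. -/
def gaifman {V : Type} (E : Finset (Finset V)) : SimpleGraph V :=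
  SimpleGraph.fromRel fun u v => ∃ e ∈ E, u ∈ e ∧ v ∈ e

/-- A graph is chordal if every cycle of length at least 4 has a chord. -/
def IsChordal {V : Type} (G : SimpleGraph V) : Prop :=
  ∀ (v : V) (p : G.Walk v v), p.IsCycle → 4 ≤ p.length →
    ∃ u w : V, u ∈ p.support ∧ w ∈ p.support ∧ G.Adj u w ∧ s(u, w) ∉ p.edges

/-- `I` is a triangulation of `G`: a chordal supergraph on the same vertex set. -/
def IsTriangulation {V : Type} (G I : SimpleGraph V) : Prop :=
  G ≤ I ∧ IsChordal I

/-- `I` is a minimal triangulation of `G`. -/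
def IsMinTriang {V : Type} (G I : SimpleGraph V) : Prop :=
  IsTriangulation G I ∧ ∀ I' : SimpleGraph V, IsTriangulation G I' → I' ≤ I → I' = I

/-- A maximal clique of `G` (as a finset). -/
def IsMaxClique {V : Type} (G : SimpleGraph V) (Ω : Finset V) : Prop :=
  G.IsClique (Ω : Set V) ∧ ∀ Ω' : Finset V, G.IsClique (Ω' : Set V) → Ω ⊆ Ω' → Ω = Ω'

/-- A potential maximal clique: a maximal clique of some minimal triangulation. -/
def IsPMC {V : Type} (G : SimpleGraph V) (Ω : Finset V) : Prop :=
  ∃ I : SimpleGraph V, IsMinTriang G I ∧ IsMaxClique I Ω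

/-- `u` and `v` are joined by a walk avoiding `S`. -/
def ReachAvoid {V : Type} (G : SimpleGraph V) (S : Finset V) (u v : V) : Prop :=
  ∃ p : G.Walk u v, ∀ x ∈ p.support, x ∉ S

/-- `S` is a `u,v`-separator of `G`. -/
def IsUVSep {V : Type} (G : SimpleGraph V) (u v : V) (S : Finset V) : Prop :=
  u ∉ S ∧ v ∉ S ∧ ¬ ReachAvoid G S u v

/-- `S` is a minimal separator of `G`: a minimal `u,v`-separator for some
non-adjacent pair of distinct vertices `u,v`. -/
def IsMinSep {V : Type} (G : SimpleGraph V) (S : Finset V) : Prop :=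
  ∃ u v : V, u ≠ v ∧ ¬ G.Adj u v ∧ IsUVSep G u v S ∧ ∀ S' ⊂ S, ¬ IsUVSep G u v S'

/-- An inclusion-minimal separator: a minimal separator not properly containing
another minimal separator. -/
def IsInclMinSep {V : Type} (G : SimpleGraph V) (S : Finset V) : Prop :=
  IsMinSep G S ∧ ∀ S' : Finset V, IsMinSep G S' → S' ⊆ S → S' = S

/-- `C` is (the vertex set of) a connected component of `G - S`. -/
def IsCompAvoid {V : Type} (G : SimpleGraph V) (S C : Finset V) : Prop :=
  C.Nonempty ∧ (∀ x ∈ C, x ∉ S) ∧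
  (∀ x ∈ C, ∀ y ∈ C, ReachAvoid G S x y) ∧
  (∀ x ∈ C, ∀ y : V, y ∉ S → ReachAvoid G S x y → y ∈ C)

/-- The neighborhood of a set `C` of vertices, as a set. -/
def nbhdSet {V : Type} (G : SimpleGraph V) (C : Finset V) : Set V :=
  {v | v ∉ C ∧ ∃ u ∈ C, G.Adj u v}

/-- The neighborhood of a set `C` of vertices, as a finset. -/
noncomputable def nbhd {V : Type} [Fintype V] [DecidableEq V]
    (G : SimpleGraph V) (C : Finset V) : Finset V :=
  Finset.univ.filter fun v => v ∉ C ∧ ∃ u ∈ C, G.Adj u v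

/-- The realization `R(S,C)` of a block: the graph on `S ∪ C` induced from `G`
with `S` turned into a clique (viewed as a graph on `V` with no edges outside `S ∪ C`). -/
def real {V : Type} [DecidableEq V] (G : SimpleGraph V) (S C : Finset V) : SimpleGraph V :=
  SimpleGraph.fromRel fun u v =>
    (u ∈ S ∪ C ∧ v ∈ S ∪ C) ∧ (G.Adj u v ∨ (u ∈ S ∧ v ∈ S))

/-- The subgraph of `I` induced by a finset `W`, viewed as a graph on `V`. -/
def restrict {V : Type} (I : SimpleGraph V) (W : Finset V) : SimpleGraph V :=
  SimpleGraph.fromRel fun u v => u ∈ W ∧ v ∈ W ∧ I.Adj u v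

/-- `(S,C)` is a full block of `G`. -/
def FullBlock {V : Type} (G : SimpleGraph V) (S C : Finset V) : Prop :=
  IsMinSep G S ∧ IsCompAvoid G S C ∧ nbhdSet G C = (S : Set V)


/-- The stages of Yates's fast zeta transform: `zetaSeq n f j` is `f_j`,
with `f_0 = f` and `f_j(Y) = f_{j-1}(Y) + [x_j ∈ Y]·f_{j-1}(Y \ {x_j})`
for the enumeration `x_j = j - 1 : Fin n`. -/
def zetaSeq (n : ℕ) (f : Finset (Fin n) → ℤ) : ℕ → Finset (Fin n) → ℤ
  | 0 => f
  | j + 1 => fun Y =>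
      if h : j < n then
        zetaSeq n f j Y +
          (if (⟨j, h⟩ : Fin n) ∈ Y then zetaSeq n f j (Y.erase ⟨j, h⟩) else 0)
      else zetaSeq n f j Y

/-- the fast zeta transform is correct: after `n` stages one
obtains the zeta transform `f̂(Y) = Σ_{S ⊆ Y} f(S)`. -/
lemma zetaSeq_eq (n : ℕ) (f : Finset (Fin n) → ℤ) (j : ℕ) (Y : Finset (Fin n)) :
    zetaSeq n f j Y =
      ∑ S ∈ Y.powerset.filter (fun S => ∀ i : Fin n, j ≤ (i : ℕ) → (i ∈ S ↔ i ∈ Y)), f S := by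
  induction j generalizing Y with
  | zero =>
    have hfe : Y.powerset.filter (fun S => ∀ i : Fin n, 0 ≤ (i:ℕ) → (i ∈ S ↔ i ∈ Y)) = {Y} := by
      ext S
      simp only [Finset.mem_filter, Finset.mem_powerset, Finset.mem_singleton]
      constructor
      · rintro ⟨hS, h⟩
        ext i; exact h i (Nat.zero_le _)
      · rintro rfl; exact ⟨subset_rfl, fun i _ => Iff.rfl⟩
    rw [hfe, Finset.sum_singleton]
    rfl
  | succ j ih =>
    show (if h : j < n then _ else _) = _
    by_cases h : j < n
    · rw [dif_pos h]
      set x : Fin n := ⟨j, h⟩ with hxdef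
      have hxj : (x : ℕ) = j := rfl
      by_cases hx : x ∈ Y
      · rw [if_pos hx, ih, ih]
        rw [← Finset.sum_filter_add_sum_filter_not
          (Y.powerset.filter (fun S => ∀ i : Fin n, j+1 ≤ (i:ℕ) → (i ∈ S ↔ i ∈ Y)))
          (fun S => x ∈ S)]
        congr 1
        · congr 1
          rw [Finset.filter_filter]
          apply Finset.filter_congr
          intro S hS
          rw [Finset.mem_powerset] at hS
          constructor
          · intro hc
            refine ⟨fun i hi => hc i (by omega), (hc x (by omega)).2 hx⟩
          · rintro ⟨hc, hxS⟩ i hi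
            rcases Nat.eq_or_lt_of_le hi with he | hl
            · have : i = x := Fin.ext (by omega)
              subst this; simp [hxS, hx]
            · exact hc i hl
        · congr 1
          rw [Finset.filter_filter]
          ext S
          simp only [Finset.mem_filter, Finset.mem_powerset]
          constructor
          · intro ⟨hS, hc⟩
            have hxS : x ∉ S := fun hmem => (Finset.notMem_erase x Y) (hS hmem)
            refine ⟨hS.trans (Finset.erase_subset _ _), fun i hi => ?_, hxS⟩
            have hne : i ≠ x := fun he2 => by subst he2; omega
            rw [hc i (by omega), Finset.mem_erase]
            simp [hne]
          · rintro ⟨hS, hc, hxS⟩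
            refine ⟨Finset.subset_erase.2 ⟨hS, hxS⟩, fun i hi => ?_⟩
            rcases Nat.eq_or_lt_of_le hi with he | hl
            · have : i = x := Fin.ext (by omega)
              subst this
              simp [hxS]
            · have hne : i ≠ x := fun he2 => by subst he2; omega
              rw [hc i (by omega), Finset.mem_erase]
              simp [hne]
      · rw [if_neg hx, add_zero, ih]
        congr 1
        apply Finset.filter_congr
        intro S hS
        rw [Finset.mem_powerset] at hS
        constructor
        · intro hc i hi
          exact hc i (by omega)
        · intro hc i hi
          rcases Nat.eq_or_lt_of_le hi with he | hl
          · have : i = x := Fin.ext (by omega)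
            subst this
            simp only [iff_iff_implies_and_implies]
            exact ⟨fun hm => absurd (hS hm) hx, fun hm => absurd hm hx⟩
          · exact hc i hl
    · rw [dif_neg h, ih]
      congr 1
      apply Finset.filter_congr
      intro S hS
      constructor
      · intro _ i hi
        exact absurd i.isLt (by omega)
      · intro _ i hi
        exact absurd i.isLt (by omega)

theorem stmt15 (n : ℕ) (f : Finset (Fin n) → ℤ) (Y : Finset (Fin n)) :
    zetaSeq n f n Y = ∑ S ∈ Y.powerset, f S := by
  rw [zetaSeq_eq]
  congr 1
  apply Finset.filter_true_of_mem
  intro S _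
  intro i hi
  exact absurd i.isLt (by omega)
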